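/- Let y, E : [0,∞) → ℝ be nonnegative and differentiable, with y' ≤ c₁·y³ and E' + ν·y ≤ 0 for constants c₁, ν > 0. If (c₁/ν)·E(0) + arctan(y(0)) < π/2, then y(t) ≤ tan((c₁/ν)·E(0) + arctan(y(0))) for all t ≥ 0. -/

import Mathlib

open Real

theorem energy_enstrophy_global_bound (c₁ ν : ℝ) (hc₁ : 0 < c₁) (hν : 0 < ν)
    (y y' E E' : ℝ → ℝ)
    (hyderiv : ∀ t ∈ Set.Ici (0:ℝ), HasDerivAt y (y' t) t)
    (hEderiv : ∀ t ∈ Set.Ici (0:ℝ), HasDerivAt E (E' t) t)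
    (hynn : ∀ t ∈ Set.Ici (0:ℝ), 0 ≤ y t)
    (hEnn : ∀ t ∈ Set.Ici (0:ℝ), 0 ≤ E t)
    (hy : ∀ t ∈ Set.Ici (0:ℝ), y' t ≤ c₁ * (y t) ^ 3)
    (hE : ∀ t ∈ Set.Ici (0:ℝ), E' t + ν * y t ≤ 0)
    (hsmall : (c₁ / ν) * E 0 + Real.arctan (y 0) < Real.pi / 2) :
    ∀ t ∈ Set.Ici (0:ℝ), y t ≤ Real.tan ((c₁ / ν) * E 0 + Real.arctan (y 0)) := by
  set G : ℝ → ℝ := fun t => Real.arctan (y t) + (c₁ / ν) * E t with hG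
  set G' : ℝ → ℝ := fun t => 1 / (1 + y t ^ 2) * y' t + (c₁ / ν) * E' t with hG'
  have hGd : ∀ t ∈ Set.Ici (0:ℝ), HasDerivAt G (G' t) t := by
    intro t ht
    exact ((hyderiv t ht).arctan).add ((hEderiv t ht).const_mul _)
  have hGd0 : ∀ t ∈ Set.Ici (0:ℝ), G' t ≤ 0 := by
    intro t ht
    have h1 : 0 < 1 + y t ^ 2 := by nlinarith [sq_nonneg (y t)]
    have h2 := hy t ht
    have h3 := hE t ht
    have h4 := hynn t ht
    have key : 1 / (1 + y t ^ 2) * y' t ≤ c₁ * (y t)^3 / (1 + y t ^ 2) := by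
      have heq : c₁ * (y t)^3 / (1 + y t ^ 2) = 1 / (1 + y t ^ 2) * (c₁ * (y t)^3) := by
        ring
      rw [heq]
      exact mul_le_mul_of_nonneg_left h2 (by positivity)
    have key2 : (c₁ / ν) * E' t ≤ -(c₁ * y t) := by
      have : E' t ≤ -(ν * y t) := by linarith
      calc (c₁ / ν) * E' t ≤ (c₁ / ν) * (-(ν * y t)) := by
            apply mul_le_mul_of_nonneg_left this (le_of_lt (div_pos hc₁ hν))
        _ = -(c₁ * y t) := by field_simp
    have : c₁ * (y t)^3 / (1 + y t ^ 2) - c₁ * y t = -(c₁ * y t / (1 + y t ^ 2)) := by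
      field_simp; ring
    have hfin : c₁ * (y t)^3 / (1 + y t ^ 2) - c₁ * y t ≤ 0 := by
      rw [this]
      have : 0 ≤ c₁ * y t / (1 + y t ^ 2) := by positivity
      linarith
    simp only [hG']
    linarith
  have hanti : AntitoneOn G (Set.Ici (0:ℝ)) := by
    apply antitoneOn_of_deriv_nonpos (convex_Ici 0)
    · exact fun t ht => ((hGd t ht).continuousAt).continuousWithinAt
    · intro t ht
      rw [interior_Ici] at ht
      exact ((hGd t (Set.mem_Ici.mpr (le_of_lt (Set.mem_Ioi.mp ht)))).differentiableAt).differentiableWithinAt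
    · intro t ht
      rw [interior_Ici] at ht
      rw [(hGd t (Set.mem_Ici.mpr (le_of_lt (Set.mem_Ioi.mp ht)))).deriv]
      exact hGd0 t (Set.mem_Ici.mpr (le_of_lt (Set.mem_Ioi.mp ht)))
  intro t ht
  have hGle : G t ≤ G 0 := hanti Set.self_mem_Ici ht ht
  have harc : Real.arctan (y t) ≤ (c₁ / ν) * E 0 + Real.arctan (y 0) := by
    have hEt : 0 ≤ (c₁ / ν) * E t := by
      have := hEnn t ht
      positivity
    simp only [hG] at hGle
    linarith
  have h1 : Real.arctan (y t) ∈ Set.Ioo (-(π/2)) (π/2) := by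
    constructor
    · linarith [Real.neg_pi_div_two_lt_arctan (y t)]
    · exact Real.arctan_lt_pi_div_two (y t)
  have h2 : (c₁ / ν) * E 0 + Real.arctan (y 0) ∈ Set.Ioo (-(π/2)) (π/2) := by
    constructor
    · have hE0 : 0 ≤ (c₁ / ν) * E 0 := by
        have := hEnn 0 Set.self_mem_Ici; positivity
      have := Real.neg_pi_div_two_lt_arctan (y 0)
      linarith
    · exact hsmall
  calc y t = Real.tan (Real.arctan (y t)) := (Real.tan_arctan (y t)).symm
    _ ≤ Real.tan ((c₁ / ν) * E 0 + Real.arctan (y 0)) :=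
        Real.strictMonoOn_tan.monotoneOn h1 h2 harc
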